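/- Let α ∈ (0,1], R > 0, H ≥ 0, and let f : ℝ → ℂ be supported in [-R, R] and satisfy |f(x) - f(y)| ≤ H·|x - y|^α for all x, y ∈ ℝ. Then for every ω ∈ ℝ with ω ≠ 0, |∫_ℝ f(s)·e^{iωs} ds| ≤ (R + π/|ω|)·H·(π/|ω|)^α. -/

import Mathlib

open MeasureTheory Real

/-- Oscillation-cancellation estimate for Hölder amplitudes: if `f : ℝ → ℂ` is
supported in `[-R, R]` and `α`-Hölder with constant `H`, then for any nonzero
frequency `ω`, `|∫ f(s) e^{iωs} ds| ≤ (R + π/|ω|) · H · (π/|ω|)^α`. -/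
theorem oscillatory_integral_holder_bound
    (α R H : ℝ) (hα : α ∈ Set.Ioc (0 : ℝ) 1) (hR : 0 < R) (hH : 0 ≤ H)
    (f : ℝ → ℂ) (hsupp : Function.support f ⊆ Set.Icc (-R) R)
    (hHolder : ∀ x y : ℝ, ‖f x - f y‖ ≤ H * |x - y| ^ α)
    (ω : ℝ) (hω : ω ≠ 0) :
    ‖∫ s : ℝ, f s * Complex.exp (Complex.I * (ω : ℂ) * (s : ℂ))‖ ≤
      (R + Real.pi / |ω|) * H * (Real.pi / |ω|) ^ α := by
  obtain ⟨hα0, hα1⟩ := hα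
  set T : ℝ := Real.pi / ω with hTdef
  have hTabs : |T| = Real.pi / |ω| := by
    rw [hTdef, abs_div, abs_of_pos Real.pi_pos]
  have hTabs_pos : 0 < |T| := by
    rw [hTabs]; positivity
  -- continuity of f
  have hcont : Continuous f := by
    rw [Metric.continuous_iff]
    intro x ε hε
    rcases eq_or_lt_of_le hH with hH0 | hHpos
    · exact ⟨1, one_pos, fun y _ => lt_of_le_of_lt
        (by simpa [dist_eq_norm, ← hH0] using hHolder y x) hε⟩
    · refine ⟨(ε / H) ^ (1/α), Real.rpow_pos_of_pos (by positivity) _, fun y hy => ?_⟩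
      have h1 : ‖f y - f x‖ ≤ H * |y - x| ^ α := hHolder y x
      have h2 : |y - x| ^ α < ((ε / H) ^ (1/α)) ^ α := by
        apply Real.rpow_lt_rpow (abs_nonneg _) _ hα0
        simpa [Real.dist_eq] using hy
      rw [← Real.rpow_mul (by positivity), one_div,
        inv_mul_cancel₀ (ne_of_gt hα0), Real.rpow_one] at h2
      calc dist (f y) (f x) = ‖f y - f x‖ := by rw [dist_eq_norm]
        _ ≤ H * |y - x| ^ α := h1
        _ < H * (ε / H) := by exact mul_lt_mul_of_pos_left h2 hHpos
        _ = ε := by field_simp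
  have hcomp : HasCompactSupport f :=
    HasCompactSupport.of_support_subset_isCompact isCompact_Icc hsupp
  set e : ℝ → ℂ := fun s => Complex.exp (Complex.I * (ω : ℂ) * (s : ℂ)) with he
  have hecont : Continuous e := by fun_prop
  set g : ℝ → ℂ := fun s => f s * e s with hg
  have hgcont : Continuous g := hcont.mul hecont
  have hgsupp : HasCompactSupport g := hcomp.mul_right
  have hgint : Integrable g := hgcont.integrable_of_hasCompactSupport hgsupp
  -- half-period shift
  have hωT : (Complex.I * (ω : ℂ) * (T : ℂ)) = Real.pi * Complex.I := by
    rw [hTdef]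
    push_cast
    have : (ω : ℂ) ≠ 0 := by exact_mod_cast hω
    field_simp
  have hshift : ∀ s : ℝ, g (s + T) = -(f (s + T) * e s) := by
    intro s
    simp only [hg, he]
    push_cast
    rw [mul_add, Complex.exp_add]
    rw [show Complex.I * (ω : ℂ) * (T : ℂ) = Real.pi * Complex.I from hωT,
      Complex.exp_pi_mul_I]
    ring
  have htrans : ∫ s : ℝ, g (s + T) = ∫ s : ℝ, g s :=
    integral_add_right_eq_self g T
  have hint2 : Integrable (fun s : ℝ => f (s + T) * e s) := by
    have heq : (fun s : ℝ => f (s + T) * e s) = fun s : ℝ => -g (s + T) := by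
      ext s; rw [hshift]; ring
    rw [heq]
    exact (hgint.comp_add_right T).neg
  have hkey : ∫ s : ℝ, (f s - f (s + T)) * e s = (2 : ℂ) * ∫ s : ℝ, g s := by
    have h1 : ∫ s : ℝ, (f s - f (s + T)) * e s
        = (∫ s : ℝ, g s) - ∫ s : ℝ, f (s + T) * e s := by
      rw [← integral_sub hgint hint2]
      congr 1; ext s; simp [hg]; ring
    have h2 : ∫ s : ℝ, f (s + T) * e s = -∫ s : ℝ, g s := by
      rw [← htrans]
      rw [← integral_neg]
      congr 1; ext s; rw [hshift s]; ring
    rw [h1, h2]; ring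
  -- bound the difference integral
  set S : Set ℝ := Set.Icc (-(R + |T|)) (R + |T|) with hS
  have hvanish : ∀ s : ℝ, s ∉ S → (f s - f (s + T)) * e s = 0 := by
    intro s hs
    have habs : R + |T| < |s| := by
      by_contra h
      push_neg at h
      exact hs (abs_le.mp h |>.elim fun h1 h2 => ⟨h1, h2⟩)
    have hf1 : f s = 0 := by
      by_contra h
      have := hsupp h
      rw [Set.mem_Icc] at this
      have : |s| ≤ R := abs_le.mpr this
      linarith [hTabs_pos]
    have hf2 : f (s + T) = 0 := by
      by_contra h
      have := hsupp h
      rw [Set.mem_Icc] at this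
      have h1 : |s + T| ≤ R := abs_le.mpr this
      have h2 : |s| - |T| ≤ |s + T| := by
        have := abs_sub_abs_le_abs_sub s (-T)
        simpa [sub_neg_eq_add] using this
      linarith
    rw [hf1, hf2]; ring
  have hrw : ∫ s : ℝ, (f s - f (s + T)) * e s
      = ∫ s in S, (f s - f (s + T)) * e s :=
    (setIntegral_eq_integral_of_forall_compl_eq_zero hvanish).symm
  have hbound : ‖∫ s in S, (f s - f (s + T)) * e s‖
      ≤ (2 * (R + |T|)) * (H * |T| ^ α) := by
    have hvol : volume S < ⊤ := by
      rw [hS, Real.volume_Icc]; exact ENNReal.ofReal_lt_top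
    have hC : ∀ s ∈ S, ‖(f s - f (s + T)) * e s‖ ≤ H * |T| ^ α := by
      intro s _
      rw [norm_mul]
      have he1 : ‖e s‖ = 1 := by
        simp only [he]
        rw [show Complex.I * (ω : ℂ) * (s : ℂ) = ((ω * s : ℝ) : ℂ) * Complex.I by
          push_cast; ring]
        exact Complex.norm_exp_ofReal_mul_I _
      rw [he1, mul_one]
      calc ‖f s - f (s + T)‖ ≤ H * |s - (s + T)| ^ α := hHolder s (s + T)
        _ = H * |T| ^ α := by rw [show s - (s + T) = -T by ring, abs_neg]
    have hmeas : AEStronglyMeasurable (fun s : ℝ => (f s - f (s + T)) * e s)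
        (volume.restrict S) :=
      ((hcont.sub (hcont.comp (continuous_id.add continuous_const))).mul
        hecont).aestronglyMeasurable.restrict
    have hvol2 : (volume S).toReal = 2 * (R + |T|) := by
      rw [hS, Real.volume_Icc, ENNReal.toReal_ofReal (by linarith [hTabs_pos, hR.le])]
      ring
    refine (norm_setIntegral_le_of_norm_le_const (μ := volume) hvol hC).trans
      (le_of_eq ?_)
    rw [measureReal_def, hvol2]; ring
  have h2 : (2 : ℝ) * ‖∫ s : ℝ, g s‖ ≤ (2 * (R + |T|)) * (H * |T| ^ α) := by
    have : ‖(2 : ℂ) * ∫ s : ℝ, g s‖ = 2 * ‖∫ s : ℝ, g s‖ := by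
      rw [norm_mul]; norm_num
    rw [← this, ← hkey, hrw]
    exact hbound
  have hfinal : ‖∫ s : ℝ, g s‖ ≤ (R + |T|) * (H * |T| ^ α) := by linarith
  calc ‖∫ s : ℝ, f s * Complex.exp (Complex.I * (ω : ℂ) * (s : ℂ))‖
      = ‖∫ s : ℝ, g s‖ := rfl
    _ ≤ (R + |T|) * (H * |T| ^ α) := hfinal
    _ = (R + Real.pi / |ω|) * H * (Real.pi / |ω|) ^ α := by rw [hTabs]; ring
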